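/- In the ring ℝ[[u,v]] of formal power series in two variables, the substituted bivariate generating function of the lower layer is rational: αβ·(1−uv)·(1−v³)·Σ_{N≥0} u^N·(g_N∘Z) = v·(α + αv² + vβ)·(vα+β). -/

import Mathlib

open PowerSeries Filter

noncomputable section

/-- The variable `u`, viewing `ℝ[[u,z]]` as `(ℝ[[z]])[[u]]`. -/
def U : PowerSeries (PowerSeries ℝ) := PowerSeries.X

/-- The variable `z`, viewing `ℝ[[u,z]]` as `(ℝ[[z]])[[u]]`. -/
def Zv : PowerSeries (PowerSeries ℝ) := PowerSeries.C PowerSeries.X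

/-- Real constants inside `ℝ[[u,z]]`. -/
def CC (r : ℝ) : PowerSeries (PowerSeries ℝ) := PowerSeries.C (PowerSeries.C r)

/-- The embedding of `ℝ[[z]]` into `ℝ[[u,z]]` as series constant in `u`. -/
def CP (h : PowerSeries ℝ) : PowerSeries (PowerSeries ℝ) := PowerSeries.C h

/-- Composition `h ∘ Z` of formal power series; this is the usual composition whenever
`Z` has zero constant term (then for each `n` only finitely many terms contribute). -/
def psComp (h Z : PowerSeries ℝ) : PowerSeries ℝ :=
  PowerSeries.mk fun n => ∑' k : ℕ, (PowerSeries.coeff k h) * (PowerSeries.coeff n (Z ^ k))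

/-- The substitution series `Z = v · ((α+βv)(β+αv))⁻¹ ∈ ℝ[[v]]`; the inverse exists since
the constant term `αβ` is nonzero, and `Z` has zero constant term. -/
def Zsub (α β : ℝ) : PowerSeries ℝ :=
  PowerSeries.X * (((PowerSeries.C α) + (PowerSeries.C β) * PowerSeries.X) *
    ((PowerSeries.C β) + (PowerSeries.C α) * PowerSeries.X))⁻¹

section psCompLemmas

variable {Z : PowerSeries ℝ}

lemma coeff_Zpow_eq_zero (hZ : (X : PowerSeries ℝ) ∣ Z) {n k : ℕ} (h : n < k) :
    coeff n (Z ^ k) = 0 :=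
  (X_pow_dvd_iff.mp (pow_dvd_pow_of_dvd hZ k)) n h

lemma psComp_coeff (hZ : (X : PowerSeries ℝ) ∣ Z) (h : PowerSeries ℝ) (n : ℕ) :
    coeff n (psComp h Z) = ∑ k ∈ Finset.range (n+1), coeff k h * coeff n (Z ^ k) := by
  simp only [psComp, coeff_mk]
  refine tsum_eq_sum fun k hk => ?_
  rw [coeff_Zpow_eq_zero hZ (by simpa using Finset.mem_range.not.mp hk), mul_zero]

lemma psComp_add (hZ : (X : PowerSeries ℝ) ∣ Z) (a b : PowerSeries ℝ) :
    psComp (a + b) Z = psComp a Z + psComp b Z := by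
  ext n
  simp [psComp_coeff hZ, add_mul, Finset.sum_add_distrib]

lemma psComp_C_mul (hZ : (X : PowerSeries ℝ) ∣ Z) (c : ℝ) (a : PowerSeries ℝ) :
    psComp (C c * a) Z = C c * psComp a Z := by
  ext n
  simp [psComp_coeff hZ, coeff_C_mul, mul_assoc, Finset.mul_sum]

lemma psComp_one (hZ : (X : PowerSeries ℝ) ∣ Z) : psComp 1 Z = 1 := by
  ext n
  rw [psComp_coeff hZ]
  rw [Finset.sum_eq_single 0 (fun k _ hk => by simp [coeff_one, hk]) (by simp)]
  simp

lemma psComp_X_mul (hZ : (X : PowerSeries ℝ) ∣ Z) (a : PowerSeries ℝ) :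
    psComp (X * a) Z = Z * psComp a Z := by
  ext n
  rw [psComp_coeff hZ, coeff_mul]
  have hR : ∀ p ∈ Finset.HasAntidiagonal.antidiagonal n,
      coeff p.1 Z * coeff p.2 (psComp a Z)
        = ∑ j ∈ Finset.range (n+1), coeff j a * (coeff p.1 Z * coeff p.2 (Z ^ j)) := by
    intro p hp
    rw [psComp_coeff hZ, Finset.mul_sum]
    rw [Finset.sum_subset (Finset.range_subset_range.mpr
      (Nat.succ_le_succ (Finset.HasAntidiagonal.antidiagonal.snd_le hp)))]
    · exact Finset.sum_congr rfl fun j _ => by ring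
    · intro j _ hj
      rw [coeff_Zpow_eq_zero hZ (by simpa using Finset.mem_range.not.mp hj), mul_zero, mul_zero]
  rw [Finset.sum_congr rfl hR, Finset.sum_comm]
  have hswap : ∀ j ∈ Finset.range (n+1),
      ∑ p ∈ Finset.HasAntidiagonal.antidiagonal n, coeff j a * (coeff p.1 Z * coeff p.2 (Z ^ j))
        = coeff j a * coeff n (Z ^ (j+1)) := by
    intro j _
    rw [← Finset.mul_sum, pow_succ', coeff_mul]
  rw [Finset.sum_congr rfl hswap]
  rw [Finset.sum_range_succ']
  simp only [coeff_succ_X_mul]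
  have h0 : coeff 0 (X * a) = 0 := by
    simp [coeff_zero_eq_constantCoeff]
  rw [h0, zero_mul, add_zero]
  rw [Finset.sum_range_succ, coeff_Zpow_eq_zero hZ (Nat.lt_succ_self n), mul_zero, add_zero]

lemma psComp_CXmul (hZ : (X : PowerSeries ℝ) ∣ Z) (c : ℝ) (a : PowerSeries ℝ) :
    psComp (C c * X * a) Z = C c * Z * psComp a Z := by
  rw [mul_assoc, psComp_C_mul hZ, psComp_X_mul hZ, mul_assoc]

end psCompLemmas

lemma telescope_zero (w : ℕ → PowerSeries ℝ) (hw : ∀ N, w N = X * w (N+1)) (N : ℕ) :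
    w N = 0 := by
  have key : ∀ k N, w N = X ^ k * w (N + k) := by
    intro k
    induction k with
    | zero => simp
    | succ k ih =>
      intro N
      rw [ih N, hw (N+k), pow_succ, mul_assoc]
      rfl
  ext n
  rw [map_zero]
  exact X_pow_dvd_iff.mp ⟨w (N+(n+1)), key (n+1) N⟩ n (Nat.lt_succ_self n)

/-- After the substitution, the bivariate generating function of the lower layer is
rational: `αβ(1-uv)(1-v³)·Σ u^N (g_N∘Z) = v(α+αv²+vβ)(vα+β)` in `ℝ[[u,v]]`. -/
theorem twoStep_G_substituted
    (α β : ℝ) (hα0 : 0 < α) (hα1 : α < 1) (hβ : β = 1 - α)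
    (f g : ℕ → PowerSeries ℝ) (fQ : PowerSeries ℝ)
    (hf : ∀ N : ℕ, f (N + 2) =
      C (α * β) * X * f (N + 1) + C (α * β) * X * f (N + 3)
        + C (α ^ 2 + β ^ 2) * X * f (N + 2))
    (hf1 : f 1 = C (α * β) * X * f 0 + C (α * β) * X * f 2
        + C (α ^ 2 + β ^ 2) * X * f 1 + C (β ^ 2) * X * fQ)
    (hf0 : f 0 = 1 + C (α * β) * X * f 1 + C (α ^ 2 + β ^ 2) * X * f 0
        + C (α * β) * X * fQ)
    (hfQ : fQ = C (α * β) * X * g 0 + C (α ^ 2) * X * fQ)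
    (hg : ∀ N : ℕ, g (N + 1) = C (α * β) * X * g N + C (α * β) * X * g (N + 2)
        + C (α ^ 2 + β ^ 2) * X * g (N + 1))
    (hg0 : g 0 = C (α * β) * X * f 0 + C (α * β) * X * g 1
        + C (α * β) * X * fQ + C (α ^ 2 + β ^ 2) * X * g 0)
    (hsupp : ∀ m N : ℕ, m < N → coeff m (f N) = 0 ∧ coeff m (g N) = 0) :
    CC (α * β) * (1 - U * Zv) * (1 - Zv ^ 3) * PowerSeries.mk (fun N => psComp (g N) (Zsub α β)) =
      Zv * (CC α + CC α * Zv ^ 2 + Zv * CC β) * (Zv * CC α + CC β) := by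
  have hβpos : 0 < β := by rw [hβ]; linarith
  have hαne : α ≠ 0 := ne_of_gt hα0
  have hβne : β ≠ 0 := ne_of_gt hβpos
  have hCa : C α ≠ 0 := fun h => hαne (by simpa using congrArg (constantCoeff) h)
  have hCb : C β ≠ 0 := fun h => hβne (by simpa using congrArg (constantCoeff) h)
  have hCab : C α * C β ≠ 0 := mul_ne_zero hCa hCb
  have hZdvd : (X : PowerSeries ℝ) ∣ Zsub α β := Dvd.intro _ rfl
  -- the key kernel identity D * Z = X
  have hDconst : constantCoeff ((C α + C β * X) * (C β + C α * X)) = α * β := by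
    simp
  have hDZ : ((C α + C β * X) * (C β + C α * X)) * Zsub α β = X := by
    rw [Zsub, show ((C α + C β * X) * (C β + C α * X)) *
        (X * (((C α) + (C β) * X) * ((C β) + (C α) * X))⁻¹)
      = X * (((C α + C β * X) * (C β + C α * X)) *
        (((C α) + (C β) * X) * ((C β) + (C α) * X))⁻¹) from by ring]
    rw [PowerSeries.mul_inv_cancel _ (by rw [hDconst]; exact mul_ne_zero hαne hβne), mul_one]
  -- composed equations
  have Eg : ∀ N, psComp (g (N+1)) (Zsub α β)
      = C (α * β) * Zsub α β * psComp (g N) (Zsub α β)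
        + C (α * β) * Zsub α β * psComp (g (N+2)) (Zsub α β)
        + C (α ^ 2 + β ^ 2) * Zsub α β * psComp (g (N+1)) (Zsub α β) := by
    intro N
    have := congrArg (fun t => psComp t (Zsub α β)) (hg N)
    simpa only [psComp_add hZdvd, psComp_CXmul hZdvd] using this
  have Ef : ∀ N, psComp (f (N+2)) (Zsub α β)
      = C (α * β) * Zsub α β * psComp (f (N+1)) (Zsub α β)
        + C (α * β) * Zsub α β * psComp (f (N+3)) (Zsub α β)
        + C (α ^ 2 + β ^ 2) * Zsub α β * psComp (f (N+2)) (Zsub α β) := by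
    intro N
    have := congrArg (fun t => psComp t (Zsub α β)) (hf N)
    simpa only [psComp_add hZdvd, psComp_CXmul hZdvd] using this
  have Ef1 : psComp (f 1) (Zsub α β)
      = C (α * β) * Zsub α β * psComp (f 0) (Zsub α β)
        + C (α * β) * Zsub α β * psComp (f 2) (Zsub α β)
        + C (α ^ 2 + β ^ 2) * Zsub α β * psComp (f 1) (Zsub α β)
        + C (β ^ 2) * Zsub α β * psComp fQ (Zsub α β) := by
    have := congrArg (fun t => psComp t (Zsub α β)) hf1
    simpa only [psComp_add hZdvd, psComp_CXmul hZdvd] using this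
  have Ef0 : psComp (f 0) (Zsub α β)
      = 1 + C (α * β) * Zsub α β * psComp (f 1) (Zsub α β)
        + C (α ^ 2 + β ^ 2) * Zsub α β * psComp (f 0) (Zsub α β)
        + C (α * β) * Zsub α β * psComp fQ (Zsub α β) := by
    have := congrArg (fun t => psComp t (Zsub α β)) hf0
    simpa only [psComp_add hZdvd, psComp_CXmul hZdvd, psComp_one hZdvd] using this
  have EfQ : psComp fQ (Zsub α β)
      = C (α * β) * Zsub α β * psComp (g 0) (Zsub α β)
        + C (α ^ 2) * Zsub α β * psComp fQ (Zsub α β) := by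
    have := congrArg (fun t => psComp t (Zsub α β)) hfQ
    simpa only [psComp_add hZdvd, psComp_CXmul hZdvd] using this
  have Eg0 : psComp (g 0) (Zsub α β)
      = C (α * β) * Zsub α β * psComp (f 0) (Zsub α β)
        + C (α * β) * Zsub α β * psComp (g 1) (Zsub α β)
        + C (α * β) * Zsub α β * psComp fQ (Zsub α β)
        + C (α ^ 2 + β ^ 2) * Zsub α β * psComp (g 0) (Zsub α β) := by
    have := congrArg (fun t => psComp t (Zsub α β)) hg0
    simpa only [psComp_add hZdvd, psComp_CXmul hZdvd] using this
  simp only [map_mul, map_add, map_pow] at Eg Ef Ef1 Ef0 EfQ Eg0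
  -- kernel simplification for g
  have key1 : ∀ N, (1 + X^2) * psComp (g (N+1)) (Zsub α β)
      = X * psComp (g N) (Zsub α β) + X * psComp (g (N+2)) (Zsub α β) := by
    intro N
    apply mul_left_cancel₀ hCab
    linear_combination ((C α + C β * X) * (C β + C α * X)) * (Eg N)
      + (C α * C β * (psComp (g N) (Zsub α β) + psComp (g (N+2)) (Zsub α β))
        + ((C α)^2 + (C β)^2) * psComp (g (N+1)) (Zsub α β)) * hDZ
  have key1f : ∀ N, (1 + X^2) * psComp (f (N+2)) (Zsub α β)
      = X * psComp (f (N+1)) (Zsub α β) + X * psComp (f (N+3)) (Zsub α β) := by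
    intro N
    apply mul_left_cancel₀ hCab
    linear_combination ((C α + C β * X) * (C β + C α * X)) * (Ef N)
      + (C α * C β * (psComp (f (N+1)) (Zsub α β) + psComp (f (N+3)) (Zsub α β))
        + ((C α)^2 + (C β)^2) * psComp (f (N+2)) (Zsub α β)) * hDZ
  -- telescoping: g_{N+1}∘Z = X · g_N∘Z
  have hH : ∀ N, psComp (g (N+1)) (Zsub α β) = X * psComp (g N) (Zsub α β) := by
    have h0 := telescope_zero
      (fun N => psComp (g (N+1)) (Zsub α β) - X * psComp (g N) (Zsub α β))
      (fun N => by linear_combination (key1 N))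
    intro N
    have := h0 N
    simp only [sub_eq_zero] at this
    exact this
  have hP2 : psComp (f 2) (Zsub α β) = X * psComp (f 1) (Zsub α β) := by
    have h0 := telescope_zero
      (fun N => psComp (f (N+2)) (Zsub α β) - X * psComp (f (N+1)) (Zsub α β))
      (fun N => by linear_combination (key1f N))
    have := h0 0
    simp only [sub_eq_zero] at this
    exact this
  -- clean boundary relations
  have ieq : psComp (g 0) (Zsub α β)
      = X * (psComp (f 0) (Zsub α β) + psComp fQ (Zsub α β)) := by
    apply mul_left_cancel₀ hCab
    linear_combination ((C α + C β * X) * (C β + C α * X)) * Eg0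
      + (C α * C β * (psComp (f 0) (Zsub α β) + psComp (g 1) (Zsub α β)
          + psComp fQ (Zsub α β))
        + ((C α)^2 + (C β)^2) * psComp (g 0) (Zsub α β)) * hDZ
      + C α * C β * X * (hH 0)
  have Aeq : (C α + C β * X) * psComp fQ (Zsub α β)
      = C α * X^2 * psComp (f 0) (Zsub α β) := by
    apply mul_left_cancel₀ hCb
    linear_combination ((C α + C β * X) * (C β + C α * X)) * EfQ
      + (C α * C β * psComp (g 0) (Zsub α β)
        + (C α)^2 * psComp fQ (Zsub α β)) * hDZ
      + C α * C β * X * ieq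
  have iiieq : C α * psComp (f 1) (Zsub α β)
      = C α * X * psComp (f 0) (Zsub α β) + C β * X * psComp fQ (Zsub α β) := by
    apply mul_left_cancel₀ hCb
    linear_combination ((C α + C β * X) * (C β + C α * X)) * Ef1
      + (C α * C β * (psComp (f 0) (Zsub α β) + psComp (f 2) (Zsub α β))
        + ((C α)^2 + (C β)^2) * psComp (f 1) (Zsub α β)
        + (C β)^2 * psComp fQ (Zsub α β)) * hDZ
      + C α * C β * X * hP2
  -- the solved identities
  have S1 : (C α + C β * X) * psComp (g 0) (Zsub α β)
      = X * psComp (f 0) (Zsub α β) * ((C α + C β * X) + C α * X^2) := by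
    linear_combination (C α + C β * X) * ieq + X * Aeq
  have S2 : C α * C β * (1 - X^3) * (C α + C β * X) * psComp (f 0) (Zsub α β)
      = ((C α + C β * X) * (C β + C α * X)) * (C α + C β * X) := by
    linear_combination (C α + C β * X) *
        (((C α + C β * X) * (C β + C α * X)) * Ef0
          + (C α * C β * psComp (f 1) (Zsub α β)
            + ((C α)^2 + (C β)^2) * psComp (f 0) (Zsub α β)
            + C α * C β * psComp fQ (Zsub α β)) * hDZ)
      + C β * X * (C α + C β * X) * iiieq
      + (C α * C β * X + (C β)^2 * X^2) * Aeq
  have ht2 : ((C α + C β * X))^2 ≠ 0 := by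
    apply pow_ne_zero
    intro h
    have := congrArg (constantCoeff) h
    simp at this
    exact hαne this
  have finalV : C (α * β) * (1 - X^3) * psComp (g 0) (Zsub α β)
      = X * (C α + C α * X^2 + X * C β) * (X * C α + C β) := by
    apply mul_left_cancel₀ ht2
    rw [map_mul]
    linear_combination C α * C β * (1 - X^3) * (C α + C β * X) * S1
      + X * ((C α + C β * X) + C α * X^2) * S2
  -- assemble in ℝ[[u,v]]
  have hone : (1 - U * Zv) * PowerSeries.mk (fun N => psComp (g N) (Zsub α β))
      = PowerSeries.C (psComp (g 0) (Zsub α β)) := by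
    ext N
    cases N with
    | zero =>
      rw [sub_mul, one_mul, map_sub, coeff_mk, coeff_zero_C]
      have : coeff 0 (U * Zv * PowerSeries.mk
          (fun N => psComp (g N) (Zsub α β))) = 0 := by
        rw [show U * Zv * PowerSeries.mk (fun N => psComp (g N) (Zsub α β))
            = X * (Zv * PowerSeries.mk (fun N => psComp (g N) (Zsub α β))) from by
          rw [U]; ring]
        simp [coeff_zero_eq_constantCoeff]
      rw [this, sub_zero]
    | succ N =>
      rw [sub_mul, one_mul, map_sub, coeff_mk]
      rw [show U * Zv * PowerSeries.mk (fun N => psComp (g N) (Zsub α β))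
          = X * (PowerSeries.C X * PowerSeries.mk (fun N => psComp (g N) (Zsub α β)))
          from by rw [U, Zv]; ring]
      rw [coeff_succ_X_mul, coeff_C_mul, coeff_mk, coeff_C]
      simp only [Nat.succ_ne_zero, if_false]
      rw [hH N, sub_self]
  have hL : CC (α * β) * (1 - U * Zv) * (1 - Zv ^ 3) *
        PowerSeries.mk (fun N => psComp (g N) (Zsub α β))
      = PowerSeries.C
          (C (α * β) * (1 - X^3) * psComp (g 0) (Zsub α β)) := by
    rw [show CC (α * β) * (1 - U * Zv) * (1 - Zv ^ 3) *
          PowerSeries.mk (fun N => psComp (g N) (Zsub α β))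
        = CC (α * β) * (1 - Zv ^ 3) *
          ((1 - U * Zv) * PowerSeries.mk (fun N => psComp (g N) (Zsub α β))) from by ring]
    rw [hone]
    simp only [CC, Zv, map_mul, map_sub, map_pow, map_one]
  have hR : Zv * (CC α + CC α * Zv ^ 2 + Zv * CC β) * (Zv * CC α + CC β)
      = PowerSeries.C
          (X * (C α + C α * X^2 + X * C β) * (X * C α + C β)) := by
    simp only [CC, Zv, map_mul, map_add, map_pow]
  rw [hL, hR]
  exact congrArg _ finalV
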